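/- For every k ≥ 1, the complete graph K_{2k+1} contains k pairwise edge-disjoint Hamiltonian cycles; in fact, its edge set decomposes into exactly k Hamiltonian cycles. -/

import Mathlib

namespace Walecki

/-- the t-th vertex offset in Walecki's zigzag, as an element of [0, 2k). -/
def aa (k t : ℕ) : ℕ :=
  if t % 2 = 0 then t / 2 else (if t = 1 then 0 else 2 * k - t / 2)

/-- `(i + aa k t) mod 2k`, assuming `i < k`. -/
def bb (k i t : ℕ) : ℕ :=
  if i + aa k t < 2 * k then i + aa k t else i + aa k t - 2 * k

/-- the t-th vertex of the i-th Walecki cycle, for `0 ≤ t ≤ 2k+1`; `2*k` is the hub vertex. -/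
def fv (k i t : ℕ) : ℕ :=
  if t = 0 then 2 * k else if t = 2 * k + 1 then 2 * k else bb k i t

lemma fv_lt (k i t : ℕ) (hi : i < k) (h1 : 1 ≤ t) (h2 : t ≤ 2 * k) : fv k i t < 2 * k := by
  simp only [fv, bb, aa]; split_ifs <;> first | contradiction | omega

lemma fv_zero (k i : ℕ) : fv k i 0 = 2 * k := by simp [fv]

lemma fv_top (k i : ℕ) : fv k i (2 * k + 1) = 2 * k := by simp only [fv]; split_ifs <;> first | contradiction | omega

lemma fv_one (k i : ℕ) (hi : i < k) : fv k i 1 = i := by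
  simp only [fv, bb, aa]; split_ifs <;> first | contradiction | omega

lemma fv_2k (k i : ℕ) (hi : i < k) : fv k i (2 * k) = i + k := by
  simp only [fv, bb, aa]; split_ifs <;> first | contradiction | omega

lemma fv_inj (k i t s : ℕ) (hi : i < k) (h1 : 1 ≤ t) (h2 : t ≤ 2 * k + 1)
    (h3 : 1 ≤ s) (h4 : s ≤ 2 * k + 1) (h : fv k i t = fv k i s) : t = s := by
  simp only [fv, bb, aa] at h; split_ifs at h <;> omega

lemma fv_adj (k i t : ℕ) (hi : i < k) (ht : t ≤ 2 * k) : fv k i t ≠ fv k i (t + 1) := by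
  simp only [fv, bb, aa]; split_ifs <;> first | contradiction | omega

lemma fv_sum (k i t : ℕ) (hi : i < k) (h1 : 1 ≤ t) (h2 : t + 1 ≤ 2 * k) :
    fv k i t + fv k i (t + 1) = 2 * i + t % 2 ∨
    fv k i t + fv k i (t + 1) = 2 * i + t % 2 + 2 * k := by
  simp only [fv, bb, aa]; split_ifs <;> first | contradiction | omega

lemma edge_eq (k i j t s : ℕ) (hi : i < k) (hj : j < k) (ht : t ≤ 2 * k) (hs : s ≤ 2 * k)
    (h : (fv k i t = fv k j s ∧ fv k i (t + 1) = fv k j (s + 1)) ∨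
         (fv k i t = fv k j (s + 1) ∧ fv k i (t + 1) = fv k j s)) : i = j ∧ t = s := by
  by_cases ht0 : t = 0
  · subst ht0
    by_cases hs0 : s = 0
    · subst hs0
      simp only [zero_add, fv_zero, fv_one k i hi, fv_one k j hj] at h; omega
    · by_cases hs2 : s = 2 * k
      · subst hs2
        simp only [zero_add, fv_zero, fv_top, fv_one k i hi, fv_2k k j hj] at h; omega
      · have l1 := fv_lt k j s hj (by omega) (by omega)
        have l2 := fv_lt k j (s + 1) hj (by omega) (by omega)
        simp only [zero_add, fv_zero] at h; omega
  · by_cases ht2 : t = 2 * k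
    · subst ht2
      simp only [fv_top] at h
      by_cases hs0 : s = 0
      · subst hs0
        simp only [zero_add, fv_zero, fv_2k k i hi, fv_one k j hj] at h; omega
      · by_cases hs2 : s = 2 * k
        · subst hs2
          simp only [fv_top, fv_2k k i hi, fv_2k k j hj] at h; omega
        · have l1 := fv_lt k j s hj (by omega) (by omega)
          have l2 := fv_lt k j (s + 1) hj (by omega) (by omega)
          omega
    · by_cases hs0 : s = 0
      · subst hs0
        have l1 := fv_lt k i t hi (by omega) (by omega)
        have l2 := fv_lt k i (t + 1) hi (by omega) (by omega)
        simp only [zero_add, fv_zero, fv_one k j hj] at h; omega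
      · by_cases hs2 : s = 2 * k
        · subst hs2
          have l1 := fv_lt k i t hi (by omega) (by omega)
          have l2 := fv_lt k i (t + 1) hi (by omega) (by omega)
          simp only [fv_top, fv_2k k j hj] at h; omega
        · -- both internal
          have hsum1 := fv_sum k i t hi (by omega) (by omega)
          have hsum2 := fv_sum k j s hj (by omega) (by omega)
          have hij : i = j ∧ t % 2 = s % 2 := by omega
          obtain ⟨rfl, hpar⟩ := hij
          rcases h with ⟨h1, _⟩ | ⟨h1, _⟩
          · exact ⟨rfl, fv_inj k i t s hi (by omega) (by omega) (by omega) (by omega) h1⟩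
          · have := fv_inj k i t (s + 1) hi (by omega) (by omega) (by omega) (by omega) h1
            omega


lemma fv_surj (k i v : ℕ) (hi : i < k) (hv : v < 2 * k + 1) :
    ∃ t, 1 ≤ t ∧ t ≤ 2 * k + 1 ∧ fv k i t = v := by
  by_cases h0 : v = 2 * k
  · exact ⟨2 * k + 1, by omega, by omega, by rw [fv_top]; omega⟩
  · by_cases hd0 : v = i
    · exact ⟨1, by omega, by omega, by rw [fv_one k i hi]; omega⟩
    · by_cases hiv : i ≤ v
      · by_cases hdk : v - i ≤ k
        · exact ⟨2 * (v - i), by omega, by omega, by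
            simp only [fv, bb, aa]; split_ifs <;> first | contradiction | omega⟩
        · exact ⟨2 * (2 * k - (v - i)) + 1, by omega, by omega, by
            simp only [fv, bb, aa]; split_ifs <;> first | contradiction | omega⟩
      · by_cases hdk : v + 2 * k - i ≤ k
        · exact ⟨2 * (v + 2 * k - i), by omega, by omega, by
            simp only [fv, bb, aa]; split_ifs <;> first | contradiction | omega⟩
        · exact ⟨2 * (2 * k - (v + 2 * k - i)) + 1, by omega, by omega, by
            simp only [fv, bb, aa]; split_ifs <;> first | contradiction | omega⟩

/-- `fv` packaged as an element of `Fin (2k+1)`. -/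
def fvF (k i t : ℕ) : Fin (2 * k + 1) := ⟨min (fv k i t) (2 * k), by omega⟩

lemma fv_le (k i t : ℕ) (hi : i < k) (ht : t ≤ 2 * k + 1) : fv k i t ≤ 2 * k := by
  by_cases h0 : t = 0
  · subst h0; rw [fv_zero]
  · by_cases h1 : t = 2 * k + 1
    · subst h1; rw [fv_top]
    · exact le_of_lt (fv_lt k i t hi (by omega) (by omega))

lemma fvF_val (k i t : ℕ) (hi : i < k) (ht : t ≤ 2 * k + 1) : (fvF k i t : ℕ) = fv k i t := by
  simp [fvF, Nat.min_eq_left (fv_le k i t hi ht)]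

open SimpleGraph

/-- build a walk in the complete graph from a vertex sequence. -/
def mkWalk {V : Type*} (f : ℕ → V) :
    (m : ℕ) → (∀ t, t < m → f t ≠ f (t + 1)) → (completeGraph V).Walk (f 0) (f m)
  | 0, _ => SimpleGraph.Walk.nil
  | m + 1, h => (mkWalk f m fun t ht => h t (by omega)).concat (h m (by omega))

lemma mkWalk_length {V : Type*} (f : ℕ → V) (m : ℕ) (h : ∀ t, t < m → f t ≠ f (t + 1)) :
    (mkWalk f m h).length = m := by
  induction m with
  | zero => simp [mkWalk]
  | succ n ih => simp [mkWalk, Walk.length_concat, ih]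

lemma mkWalk_support {V : Type*} (f : ℕ → V) (m : ℕ) (h : ∀ t, t < m → f t ≠ f (t + 1)) :
    (mkWalk f m h).support = (List.range (m + 1)).map f := by
  induction m with
  | zero => simp [mkWalk, List.range_succ]
  | succ n ih => simp [mkWalk, Walk.support_concat, ih, List.range_succ]

lemma mkWalk_edges {V : Type*} (f : ℕ → V) (m : ℕ) (h : ∀ t, t < m → f t ≠ f (t + 1)) :
    (mkWalk f m h).edges = (List.range m).map (fun t => s(f t, f (t + 1))) := by
  induction m with
  | zero => simp [mkWalk]
  | succ n ih => simp [mkWalk, Walk.edges_concat, ih, List.range_succ]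

end Walecki

open SimpleGraph Walecki in
theorem stmt11 (k : ℕ) (hk : 1 ≤ k) :
    ∃ (v : Fin k → Fin (2 * k + 1))
      (c : ∀ i, (completeGraph (Fin (2 * k + 1))).Walk (v i) (v i)),
      (∀ i, (c i).IsHamiltonianCycle) ∧
      (∀ i j, i ≠ j → ∀ e ∈ (c i).edges, e ∉ (c j).edges) ∧
      (∀ e ∈ (completeGraph (Fin (2 * k + 1))).edgeSet, ∃ i, e ∈ (c i).edges) := by
  classical
  set n : ℕ := 2 * k + 1 with hn
  let f : Fin k → ℕ → Fin n := fun i t => fvF k i t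
  have vEq : ∀ (i j : Fin k) (t s : ℕ), t ≤ 2 * k + 1 → s ≤ 2 * k + 1 →
      f i t = f j s → fv k i t = fv k j s := by
    intro i j t s ht hs hEq
    have := congrArg Fin.val hEq
    rwa [fvF_val k i t i.isLt ht, fvF_val k j s j.isLt hs] at this
  have hadj : ∀ (i : Fin k) (t : ℕ), t < 2 * k + 1 → f i t ≠ f i (t + 1) := by
    intro i t ht hEq
    exact fv_adj k i t i.isLt (by omega) (vEq i i t (t + 1) (by omega) (by omega) hEq)
  have hends : ∀ i : Fin k, f i 0 = (⟨2 * k, by omega⟩ : Fin n) ∧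
      f i (2 * k + 1) = (⟨2 * k, by omega⟩ : Fin n) := by
    intro i
    refine ⟨Fin.ext ?_, Fin.ext ?_⟩
    · show (fvF k i 0 : ℕ) = 2 * k
      rw [fvF_val k i 0 i.isLt (by omega), fv_zero]
    · show (fvF k i (2 * k + 1) : ℕ) = 2 * k
      rw [fvF_val k i (2 * k + 1) i.isLt (by omega), fv_top]
  let hub : Fin n := ⟨2 * k, by omega⟩
  let c : ∀ _ : Fin k, (completeGraph (Fin n)).Walk hub hub :=
    fun i => (mkWalk (f i) (2 * k + 1) (hadj i)).copy (hends i).1 (hends i).2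
  have hedges : ∀ i, (c i).edges = (List.range (2 * k + 1)).map (fun t => s(f i t, f i (t + 1))) := by
    intro i; simp only [c, Walk.edges_copy, mkWalk_edges]
  have hsupport : ∀ i, (c i).support = (List.range (2 * k + 1 + 1)).map (f i) := by
    intro i; simp only [c, Walk.support_copy, mkWalk_support]
  have master : ∀ (i j : Fin k) (t s : ℕ), t ≤ 2 * k → s ≤ 2 * k →
      (s(f i t, f i (t + 1)) : Sym2 (Fin n)) = s(f j s, f j (s + 1)) → (i : ℕ) = (j : ℕ) ∧ t = s := by
    intro i j t s ht hs hEq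
    rw [Sym2.eq_iff] at hEq
    apply edge_eq k i j t s i.isLt j.isLt ht hs
    rcases hEq with ⟨h1, h2⟩ | ⟨h1, h2⟩
    · exact Or.inl ⟨vEq i j t s (by omega) (by omega) h1,
        vEq i j (t + 1) (s + 1) (by omega) (by omega) h2⟩
    · exact Or.inr ⟨vEq i j t (s + 1) (by omega) (by omega) h1,
        vEq i j (t + 1) s (by omega) (by omega) h2⟩
  have htail : ∀ i, (c i).support.tail = (List.range (2 * k + 1)).map (fun t => f i (t + 1)) := by
    intro i
    rw [hsupport i, List.range_succ_eq_map]
    simp [List.map_map, Function.comp, Nat.succ_eq_add_one]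
  have htail_nodup : ∀ i, (c i).support.tail.Nodup := by
    intro i; rw [htail i]
    refine List.Nodup.map_on ?_ List.nodup_range
    intro x hx y hy hxy
    simp only [List.mem_range] at hx hy
    have := fv_inj k i (x + 1) (y + 1) i.isLt (by omega) (by omega) (by omega) (by omega)
      (vEq i i (x + 1) (y + 1) (by omega) (by omega) hxy)
    omega
  have hmemtail : ∀ (i : Fin k) (w : Fin n), w ∈ (c i).support.tail := by
    intro i w
    rw [htail i]
    obtain ⟨t, ht1, ht2, ht3⟩ := fv_surj k i w i.isLt w.isLt
    refine List.mem_map.2 ⟨t - 1, List.mem_range.2 (by omega), ?_⟩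
    show f i (t - 1 + 1) = w
    rw [show t - 1 + 1 = t by omega]
    exact Fin.ext (by rw [fvF_val k i t i.isLt (by omega), ht3])
  have hlen : ∀ i, (c i).length = 2 * k + 1 := by
    intro i; simp only [c, Walk.length_copy, mkWalk_length]
  have hnotnil : ∀ i, c i ≠ Walk.nil := by
    intro i h
    have h2 := hlen i
    rw [h, Walk.length_nil] at h2
    omega
  have htrail_nodup : ∀ i, (c i).edges.Nodup := by
    intro i; rw [hedges i]
    refine List.Nodup.map_on ?_ List.nodup_range
    intro x hx y hy hxy
    simp only [List.mem_range] at hx hy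
    exact (master i i x y (by omega) (by omega) hxy).2
  refine ⟨fun _ => hub, c, ?_, ?_, ?_⟩
  · -- Hamiltonian cycles
    intro i
    rw [Walk.isHamiltonianCycle_iff_isCycle_and_support_count_tail_eq_one]
    refine ⟨Walk.isCycle_def _ |>.mpr ⟨⟨htrail_nodup i⟩, hnotnil i, htail_nodup i⟩, ?_⟩
    intro a
    have h1 := List.nodup_iff_count_le_one.1 (htail_nodup i) a
    have h2 := List.count_pos_iff.2 (hmemtail i a)
    omega
  · -- edge-disjoint
    intro i j hij e hei hej
    rw [hedges i] at hei
    rw [hedges j] at hej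
    obtain ⟨t, ht, rfl⟩ := List.mem_map.1 hei
    obtain ⟨s, hs, hEq⟩ := List.mem_map.1 hej
    simp only [List.mem_range] at ht hs
    exact hij (Fin.ext (master i j t s (by omega) (by omega) hEq.symm).1)
  · -- coverage
    intro e he
    let E : Fin k → Finset (Sym2 (Fin n)) := fun i => ((c i).edges).toFinset
    have hEcard : ∀ i, (E i).card = 2 * k + 1 := by
      intro i
      rw [show E i = ((c i).edges).toFinset from rfl,
        List.toFinset_card_of_nodup (htrail_nodup i), hedges i, List.length_map,
        List.length_range]
    have hdisj : ∀ i ∈ (Finset.univ : Finset (Fin k)), ∀ j ∈ Finset.univ,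
        i ≠ j → Disjoint (E i) (E j) := by
      intro i _ j _ hij
      rw [Finset.disjoint_left]
      intro a hai haj
      rw [List.mem_toFinset, hedges i] at hai
      rw [List.mem_toFinset, hedges j] at haj
      obtain ⟨t, ht, rfl⟩ := List.mem_map.1 hai
      obtain ⟨s, hs, hEq⟩ := List.mem_map.1 haj
      simp only [List.mem_range] at ht hs
      exact hij (Fin.ext (master i j t s (by omega) (by omega) hEq.symm).1)
    have hsub : Finset.univ.biUnion E ⊆ (⊤ : SimpleGraph (Fin n)).edgeFinset := by
      intro a ha
      obtain ⟨i, _, hai⟩ := Finset.mem_biUnion.1 ha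
      rw [List.mem_toFinset] at hai
      rw [mem_edgeFinset, ← completeGraph_eq_top]
      exact (c i).edges_subset_edgeSet hai
    have hcardU : (Finset.univ.biUnion E).card = k * (2 * k + 1) := by
      rw [Finset.card_biUnion hdisj]
      simp [hEcard, Finset.sum_const, Finset.card_univ]
    have htot : (⊤ : SimpleGraph (Fin n)).edgeFinset.card = k * (2 * k + 1) := by
      rw [card_edgeFinset_top_eq_card_choose_two, Fintype.card_fin, Nat.choose_two_right]
      rw [show (2 * k + 1) * (2 * k + 1 - 1) = k * (2 * k + 1) * 2 by
        rw [Nat.add_sub_cancel]; ring]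
      exact Nat.mul_div_cancel _ (by norm_num)
    have hUeq : Finset.univ.biUnion E = (⊤ : SimpleGraph (Fin n)).edgeFinset :=
      Finset.eq_of_subset_of_card_le hsub (by omega)
    have he' : e ∈ Finset.univ.biUnion E := by
      rw [hUeq, mem_edgeFinset, ← completeGraph_eq_top]
      exact he
    obtain ⟨i, _, hi⟩ := Finset.mem_biUnion.1 he'
    exact ⟨i, List.mem_toFinset.1 hi⟩
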